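/- Let a ≥ 0, c′ ≥ 0, H₁ ≥ 0, H₂ ≥ 0, λ̂ > λ > 0, β > 0, and t_k ≥ 0. Let ẽ : ℝ → ℝⁿ be differentiable on [t_k, T] with ‖ẽ(t_k)‖ ≤ β·exp(−λ·t_k) and ‖ẽ′(t)‖ ≤ a·‖ẽ(t)‖ + c′·(H₁·exp(−λ̂·t) + H₂·exp(−λ·t)) for all t ∈ [t_k, T]. Then for all t ∈ [t_k, T], writing d = t − t_k, ‖ẽ(t)‖ ≤ β·exp(a·d)·exp(−λ·t_k) + (exp(a·d) − exp(−λ̂·d))·(H₁·c′/(a+λ̂))·exp(−λ̂·t_k) + (exp(a·d) − exp(−λ·d))·(H₂·c′/(a+λ))·exp(−λ·t_k). -/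

import Mathlib

/-- Grönwall-type bound with nonzero initial condition for the delayed-model
error: if `‖ẽ(t_k)‖ ≤ β e^{-λ t_k}` and
`‖ẽ′(t)‖ ≤ a‖ẽ(t)‖ + c′(H₁ e^{-λ̂ t} + H₂ e^{-λ t})` on `[t_k, T]`, then on `[t_k, T]`,
with `d = t - t_k`,
`‖ẽ(t)‖ ≤ β e^{a d} e^{-λ t_k} + (e^{a d} - e^{-λ̂ d})(H₁c′/(a+λ̂))e^{-λ̂ t_k}
          + (e^{a d} - e^{-λ d})(H₂c′/(a+λ))e^{-λ t_k}`. -/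
theorem stmt11 (n : ℕ) (hn : 0 < n) (a c' H₁ H₂ lamhat lam β tk T : ℝ)
    (ha : 0 ≤ a) (hc' : 0 ≤ c') (hH₁ : 0 ≤ H₁) (hH₂ : 0 ≤ H₂)
    (hlam : 0 < lam) (hlamlt : lam < lamhat) (hβ : 0 < β) (htk : 0 ≤ tk)
    (e e' : ℝ → EuclideanSpace ℝ (Fin n))
    (hderiv : ∀ t ∈ Set.Icc tk T, HasDerivWithinAt e (e' t) (Set.Icc tk T) t)
    (h0 : ‖e tk‖ ≤ β * Real.exp (-(lam * tk)))
    (hbnd : ∀ t ∈ Set.Icc tk T,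
      ‖e' t‖ ≤ a * ‖e t‖ + c' * (H₁ * Real.exp (-(lamhat * t)) + H₂ * Real.exp (-(lam * t)))) :
    ∀ t ∈ Set.Icc tk T,
      ‖e t‖ ≤
        β * Real.exp (a * (t - tk)) * Real.exp (-(lam * tk)) +
        (Real.exp (a * (t - tk)) - Real.exp (-(lamhat * (t - tk)))) *
          (H₁ * c' / (a + lamhat)) * Real.exp (-(lamhat * tk)) +
        (Real.exp (a * (t - tk)) - Real.exp (-(lam * (t - tk)))) *
          (H₂ * c' / (a + lam)) * Real.exp (-(lam * tk)) := by
  have hlh : 0 < a + lamhat := by linarith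
  have hl : 0 < a + lam := by linarith
  set C₁ := H₁ * c' / (a + lamhat) with hC₁
  set C₂ := H₂ * c' / (a + lam) with hC₂
  set B : ℝ → ℝ → ℝ := fun η t =>
    β * Real.exp (a * (t - tk)) * Real.exp (-(lam * tk)) +
      (Real.exp (a * (t - tk)) - Real.exp ((-lamhat) * (t - tk))) * C₁ *
        Real.exp (-(lamhat * tk)) +
      (Real.exp (a * (t - tk)) - Real.exp ((-lam) * (t - tk))) * C₂ * Real.exp (-(lam * tk)) +
      η * Real.exp ((a + 1) * (t - tk)) with hBdef
  set B' : ℝ → ℝ → ℝ := fun η t =>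
    β * (a * Real.exp (a * (t - tk))) * Real.exp (-(lam * tk)) +
      (a * Real.exp (a * (t - tk)) + lamhat * Real.exp ((-lamhat) * (t - tk))) * C₁ *
        Real.exp (-(lamhat * tk)) +
      (a * Real.exp (a * (t - tk)) + lam * Real.exp ((-lam) * (t - tk))) * C₂ *
        Real.exp (-(lam * tk)) +
      η * ((a + 1) * Real.exp ((a + 1) * (t - tk))) with hB'def
  have hexp : ∀ (k x : ℝ),
      HasDerivAt (fun t => Real.exp (k * (t - tk))) (k * Real.exp (k * (x - tk))) x := by
    intro k x
    have h := (((hasDerivAt_id x).sub_const tk).const_mul k).exp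
    simpa [mul_comm] using h
  have hBd : ∀ η x, HasDerivAt (B η) (B' η x) x := by
    intro η x
    have h1 := hexp a x
    have h2 := hexp (-lamhat) x
    have h3 := hexp (-lam) x
    have h4 := hexp (a + 1) x
    have hall := ((((h1.const_mul β).mul_const (Real.exp (-(lam * tk)))).add
        (((h1.sub h2).mul_const C₁).mul_const (Real.exp (-(lamhat * tk))))).add
        (((h1.sub h3).mul_const C₂).mul_const (Real.exp (-(lam * tk))))).add
        (h4.const_mul η)
    refine HasDerivAt.congr_deriv hall ?_
    simp only [hB'def]
    ring
  have hcont : ContinuousOn e (Set.Icc tk T) := fun t ht => (hderiv t ht).continuousWithinAt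
  have hf' : ∀ x ∈ Set.Ico tk T, HasDerivWithinAt e (e' x) (Set.Ici x) x := fun x hx =>
    (hderiv x (Set.Ico_subset_Icc_self hx)).mono_of_mem_nhdsWithin (Icc_mem_nhdsGE_of_mem hx)
  have k1 : (a + lamhat) * C₁ = H₁ * c' := by
    rw [hC₁]; field_simp
  have k2 : (a + lam) * C₂ = H₂ * c' := by
    rw [hC₂]; field_simp
  have main : ∀ η : ℝ, 0 < η → ∀ t ∈ Set.Icc tk T, ‖e t‖ ≤ B η t := by
    intro η hη
    have ha0 : ‖e tk‖ ≤ B η tk := by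
      have hb : B η tk = β * Real.exp (-(lam * tk)) + η := by
        simp [hBdef]
      rw [hb]; linarith
    have bound : ∀ x ∈ Set.Ico tk T, ‖e x‖ = B η x → ‖e' x‖ < B' η x := by
      intro x hx hfB
      have hb := hbnd x (Set.Ico_subset_Icc_self hx)
      rw [hfB] at hb
      have m1 : (a + lamhat) * C₁ *
          (Real.exp ((-lamhat) * (x - tk)) * Real.exp (-(lamhat * tk))) =
          H₁ * c' * Real.exp (-(lamhat * x)) := by
        rw [k1, ← Real.exp_add]
        ring_nf
      have m2 : (a + lam) * C₂ *
          (Real.exp ((-lam) * (x - tk)) * Real.exp (-(lam * tk))) =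
          H₂ * c' * Real.exp (-(lam * x)) := by
        rw [k2, ← Real.exp_add]
        ring_nf
      have key : B' η x = a * B η x +
          c' * (H₁ * Real.exp (-(lamhat * x)) + H₂ * Real.exp (-(lam * x))) +
          η * Real.exp ((a + 1) * (x - tk)) := by
        simp only [hBdef, hB'def]
        linear_combination m1 + m2
      have hpos : 0 < η * Real.exp ((a + 1) * (x - tk)) := by positivity
      rw [key]; linarith
    exact fun t ht =>
      image_norm_le_of_norm_deriv_right_lt_deriv_boundary hcont hf' ha0 (hBd η) bound ht
  intro t ht
  have hE : (0:ℝ) < Real.exp ((a + 1) * (t - tk)) := Real.exp_pos _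
  have hfin : ‖e t‖ ≤ B 0 t := by
    by_contra h
    push_neg at h
    set ε := ‖e t‖ - B 0 t with hε
    have hεpos : 0 < ε := sub_pos.2 h
    have hm := main (ε / (2 * Real.exp ((a + 1) * (t - tk)))) (by positivity) t ht
    have hb : B (ε / (2 * Real.exp ((a + 1) * (t - tk)))) t = B 0 t + ε / 2 := by
      simp only [hBdef]
      field_simp
      ring
    rw [hb] at hm
    simp only [hε] at hm
    clear_value B B'
    linarith
  have hB0 : B 0 t =
      β * Real.exp (a * (t - tk)) * Real.exp (-(lam * tk)) +
        (Real.exp (a * (t - tk)) - Real.exp (-(lamhat * (t - tk)))) * C₁ *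
          Real.exp (-(lamhat * tk)) +
        (Real.exp (a * (t - tk)) - Real.exp (-(lam * (t - tk)))) * C₂ *
          Real.exp (-(lam * tk)) := by
    simp [hBdef, neg_mul]
  rwa [hB0] at hfin
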